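/- Let b > 0, g > 0, and let F, L be real numbers satisfying (F/b)² + (L/g − 1)² = 1. Define Δ = arcsin(F/b) if L ≤ g and Δ = π − arcsin(F/b) if L > g. Then b sin(Δ) = F and g(1 − cos(Δ)) = L. -/

import Mathlib

/-- Reconstruction of the phase difference from the pair (flow, loss)
satisfying the flow-loss condition. -/
theorem phase_from_flow_loss (b g F L : ℝ) (hb : 0 < b) (hg : 0 < g)
    (h : (F / b) ^ 2 + (L / g - 1) ^ 2 = 1) :
    (L ≤ g → b * Real.sin (Real.arcsin (F / b)) = F ∧
      g * (1 - Real.cos (Real.arcsin (F / b))) = L) ∧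
    (L > g → b * Real.sin (Real.pi - Real.arcsin (F / b)) = F ∧
      g * (1 - Real.cos (Real.pi - Real.arcsin (F / b))) = L) := by
  have hx2 : (F / b) ^ 2 ≤ 1 := by nlinarith [sq_nonneg (L / g - 1)]
  have hx1 : -1 ≤ F / b := by nlinarith [sq_nonneg (F / b + 1)]
  have hx1' : F / b ≤ 1 := by nlinarith [sq_nonneg (F / b - 1)]
  have hsin : Real.sin (Real.arcsin (F / b)) = F / b := Real.sin_arcsin hx1 hx1'
  have hcos : Real.cos (Real.arcsin (F / b)) = Real.sqrt (1 - (F / b) ^ 2) :=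
    Real.cos_arcsin _
  have key : Real.sqrt (1 - (F / b) ^ 2) = |L / g - 1| := by
    rw [show 1 - (F / b) ^ 2 = (L / g - 1) ^ 2 by linarith]
    exact Real.sqrt_sq_eq_abs _
  have hbF : b * Real.sin (Real.arcsin (F / b)) = F := by
    rw [hsin]; field_simp
  constructor
  · intro hL
    refine ⟨hbF, ?_⟩
    rw [hcos, key, abs_of_nonpos (by
      have := (div_le_one hg).mpr hL; linarith)]
    field_simp
    ring
  · intro hL
    have habs : |L / g - 1| = L / g - 1 := abs_of_nonneg (by
      have := (one_le_div hg).mpr hL.le; linarith)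
    constructor
    · rw [Real.sin_pi_sub, hsin]; field_simp
    · rw [Real.cos_pi_sub, hcos, key, habs]
      field_simp
      ring
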